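/- Let d, n ≥ 1 and let W be a matrix A₁ weight on ℝ^d. Then for every e ∈ ℂⁿ the scalar weight x ↦ |W(x)e| satisfies [ |We| ]_{A∞} ≤ [W]_{A₁}; that is, [W]_{A_{1,∞}^{sc}} ≤ [W]_{A₁}. -/

import Mathlib

open MeasureTheory ENNReal
open scoped ComplexOrder

noncomputable section

abbrev Rd (d : ℕ) := EuclideanSpace ℝ (Fin d)
abbrev Mat (n : ℕ) := Matrix (Fin n) (Fin n) ℂ
abbrev Vec (n : ℕ) := EuclideanSpace ℂ (Fin n)

/-- A cube in `ℝ^d` with sides parallel to the coordinate axes, given by its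
lower-left corner and (positive) side length. -/
structure Cube (d : ℕ) where
  corner : Rd d
  side : ℝ
  side_pos : 0 < side

namespace Cube

/-- The underlying set of the cube. -/
def set {d : ℕ} (Q : Cube d) : Set (Rd d) :=
  {x | ∀ i, Q.corner i ≤ x i ∧ x i ≤ Q.corner i + Q.side}

/-- The concentric triple `3Q` of a cube. -/
def triple {d : ℕ} (Q : Cube d) : Set (Rd d) :=
  {x | ∀ i, Q.corner i - Q.side ≤ x i ∧ x i ≤ Q.corner i + 2 * Q.side}

end Cube

/-- Operator norm of an `n × n` complex matrix acting on `ℂⁿ` with the Euclidean norm. -/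
def opNorm {n : ℕ} (A : Mat n) : ℝ := ‖Matrix.toEuclideanCLM (𝕜 := ℂ) (n := Fin n) A‖

/-- A matrix acting on a Euclidean vector. -/
def mvec {n : ℕ} (A : Mat n) (v : Vec n) : Vec n := Matrix.toEuclideanLin A v

/-- Fractional power of a Hermitian matrix via the spectral calculus (junk value `1`
for non-Hermitian matrices). -/
def matPow {n : ℕ} (A : Mat n) (s : ℝ) : Mat n :=
  if h : A.IsHermitian then
    (h.eigenvectorUnitary : Mat n) *
      Matrix.diagonal (fun i => ((h.eigenvalues i ^ s : ℝ) : ℂ)) *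
      star (h.eigenvectorUnitary : Mat n)
  else 1

/-- A matrix weight: measurable, positive definite (hence Hermitian) a.e. -/
def IsMatrixWeight {d n : ℕ} (W : Rd d → Mat n) : Prop :=
  (∀ i j, Measurable fun x => W x i j) ∧ ∀ᵐ x : Rd d, (W x).PosDef


/-- Componentwise measurability of a `ℂⁿ`-valued function. -/
def MeasurableV {d n : ℕ} (f : Rd d → Vec n) : Prop := ∀ i, Measurable fun x => f x i
/-- The matrix `A₁` characteristic of `W`. -/
def A1Const {d n : ℕ} (W : Rd d → Mat n) : ℝ≥0∞ :=
  ⨆ Q : Cube d,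
    essSup (fun y => (volume Q.set)⁻¹ *
      ∫⁻ x in Q.set, ENNReal.ofReal (opNorm (W x * (W y)⁻¹))) (volume.restrict Q.set)

/-- The matrix `A_q` characteristic of `W`, `1 < q < ∞`. -/
def AqConst {d n : ℕ} (W : Rd d → Mat n) (q : ℝ) : ℝ≥0∞ :=
  ⨆ Q : Cube d, (volume Q.set)⁻¹ * ∫⁻ x in Q.set,
    ((volume Q.set)⁻¹ * ∫⁻ y in Q.set,
        ENNReal.ofReal (opNorm (matPow (W x) (1/q) * matPow (W y) (-(1/q)))) ^ (q/(q-1))) ^ (q-1)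

/-- Hardy–Littlewood maximal operator (over cubes) of an `ℝ≥0∞`-valued function. -/
def HLM {d : ℕ} (g : Rd d → ℝ≥0∞) (x : Rd d) : ℝ≥0∞ :=
  ⨆ (Q : Cube d) (_ : x ∈ Q.set), (volume Q.set)⁻¹ * ∫⁻ y in Q.set, g y

/-- The Fujii–Wilson `A∞` characteristic of a scalar weight `w`. -/
def AInftyConst {d : ℕ} (w : Rd d → ℝ≥0∞) : ℝ≥0∞ :=
  ⨆ Q : Cube d, (∫⁻ x in Q.set, w x)⁻¹ * ∫⁻ x in Q.set, HLM (Q.set.indicator w) x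

/-- The scalar `A_{q,∞}` characteristic of a matrix weight `W`. -/
def AqScConst {d n : ℕ} (W : Rd d → Mat n) (q : ℝ) : ℝ≥0∞ :=
  ⨆ e : Vec n, AInftyConst (fun x => (‖mvec (matPow (W x) (1/q)) e‖₊ : ℝ≥0∞) ^ q)


/-! ### Auxiliary lemmas -/

section Aux

variable {d n : ℕ}

lemma opNorm_nonneg (A : Mat n) : 0 ≤ opNorm A := norm_nonneg _

lemma mvec_eq_clm (A : Mat n) (v : Vec n) :
    mvec A v = Matrix.toEuclideanCLM (𝕜 := ℂ) (n := Fin n) A v := by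
  rw [mvec, ← Matrix.coe_toEuclideanCLM_eq_toEuclideanLin]
  rfl

lemma mvec_norm_le (A : Mat n) (v : Vec n) : ‖mvec A v‖ ≤ opNorm A * ‖v‖ := by
  rw [mvec_eq_clm, opNorm]
  exact (Matrix.toEuclideanCLM (𝕜 := ℂ) (n := Fin n) A).le_opNorm v

lemma mvec_mul (A B : Mat n) (v : Vec n) : mvec (A * B) v = mvec A (mvec B v) := by
  simp only [mvec_eq_clm, map_mul]
  rfl

lemma matPow_one_of_posDef {A : Mat n} (hA : A.PosDef) : matPow A 1 = A := by
  rw [matPow, dif_pos hA.isHermitian]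
  have h : (fun i => ((hA.isHermitian.eigenvalues i ^ (1 : ℝ) : ℝ) : ℂ)) =
      RCLike.ofReal ∘ hA.isHermitian.eigenvalues := by
    funext i
    simp [Real.rpow_one]
  rw [h]
  conv_rhs => rw [hA.isHermitian.spectral_theorem, Unitary.conjStarAlgAut_apply]

/-- The `Cube.set` of a cube as a preimage of a box. -/
lemma cube_set_eq (Q : Cube d) : Q.set = (MeasurableEquiv.toLp 2 (Fin d → ℝ)).symm ⁻¹'
    (Set.univ.pi fun i => Set.Icc (Q.corner i) (Q.corner i + Q.side)) := by
  ext x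
  constructor
  · intro h i _
    exact h i
  · intro h i
    exact h i (Set.mem_univ i)

lemma cube_measurableSet (Q : Cube d) : MeasurableSet Q.set := by
  rw [cube_set_eq]
  exact (MeasurableEquiv.toLp 2 (Fin d → ℝ)).symm.measurable
    (MeasurableSet.univ_pi fun i => measurableSet_Icc)

lemma cube_volume (Q : Cube d) : volume Q.set = ENNReal.ofReal (Q.side ^ d) := by
  rw [cube_set_eq, (EuclideanSpace.volume_preserving_symm_measurableEquiv_toLp (Fin d)).measure_preimage
    (MeasurableSet.univ_pi fun i => measurableSet_Icc).nullMeasurableSet, volume_pi_pi]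
  simp [Real.volume_Icc, Finset.prod_const, ← ENNReal.ofReal_pow Q.side_pos.le]

lemma ennreal_inv_mul_le {a c X : ℝ≥0∞} (h : X ≤ c * a) : a⁻¹ * X ≤ c := by
  rcases eq_or_ne a 0 with h0 | h0
  · simp only [h0, mul_zero] at h
    simpa [le_antisymm h zero_le] using (zero_le : 0 ≤ c)
  rcases eq_or_ne a ∞ with ht | ht
  · simp [ht]
  calc a⁻¹ * X ≤ a⁻¹ * (c * a) := mul_le_mul_right h _
    _ = c * (a⁻¹ * a) := by ring
    _ = c := by rw [ENNReal.inv_mul_cancel h0 ht, mul_one]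

lemma ennreal_le_of_forall_mul_le {a b : ℝ≥0∞}
    (h : ∀ c : ℝ≥0∞, 1 < c → c ≠ ∞ → a ≤ c * b) : a ≤ b := by
  rcases eq_or_ne b ∞ with hb | hb
  · simp [hb]
  rcases eq_or_ne b 0 with h0 | h0
  · simpa [h0] using h 2 one_lt_two (by norm_num)
  refine ENNReal.le_of_forall_pos_le_add fun ε hε _ => ?_
  have hεb : (ε : ℝ≥0∞) / b ≠ 0 := by
    simp [ENNReal.div_eq_zero_iff, hb, hε.ne']
  have hc1 : (1 : ℝ≥0∞) < 1 + (ε : ℝ≥0∞) / b := ENNReal.lt_add_right one_ne_top hεb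
  have hct : (1 : ℝ≥0∞) + (ε : ℝ≥0∞) / b ≠ ∞ := by
    refine ENNReal.add_ne_top.2 ⟨one_ne_top, ?_⟩
    exact (ENNReal.div_lt_top coe_ne_top h0).ne
  calc a ≤ (1 + (ε : ℝ≥0∞) / b) * b := h _ hc1 hct
    _ = b + (ε : ℝ≥0∞) / b * b := by rw [add_mul, one_mul]
    _ = b + ε := by rw [ENNReal.div_mul_cancel h0 hb]

lemma hlm_mono {g g' : Rd d → ℝ≥0∞} (h : ∀ x, g x ≤ g' x) (x : Rd d) :
    HLM g x ≤ HLM g' x :=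
  iSup_mono fun _ => iSup_mono fun _ => mul_le_mul_right (lintegral_mono h) _

lemma hlm_congr_ae {g g' : Rd d → ℝ≥0∞} (h : g =ᵐ[volume] g') (x : Rd d) :
    HLM g x = HLM g' x := by
  refine iSup_congr fun R => iSup_congr fun _ => ?_
  rw [lintegral_congr_ae (ae_restrict_of_ae h)]

lemma aInftyConst_congr_ae {g g' : Rd d → ℝ≥0∞} (h : g =ᵐ[volume] g') :
    AInftyConst g = AInftyConst g' := by
  refine iSup_congr fun Q => ?_
  have h1 : ∫⁻ x in Q.set, g x = ∫⁻ x in Q.set, g' x :=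
    lintegral_congr_ae (ae_restrict_of_ae h)
  have hind : Q.set.indicator g =ᵐ[volume] Q.set.indicator g' :=
    h.mono fun y hy => by by_cases hyq : y ∈ Q.set <;> simp [Set.indicator, hyq, hy]
  have h2 : ∀ x, HLM (Q.set.indicator g) x = HLM (Q.set.indicator g') x :=
    fun x => hlm_congr_ae hind x
  rw [h1, lintegral_congr fun x => h2 x]

/-- For a fixed cube `Q`, the average of `|W·e|` over `Q` is bounded by
`[W]_{A₁} · |W(y)e|` for a.e. `y ∈ Q`. -/
lemma avg_bound {W : Rd d → Mat n} (hW2 : ∀ᵐ x : Rd d, (W x).PosDef) (e : Vec n)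
    (Q : Cube d) :
    ∀ᵐ y : Rd d, y ∈ Q.set →
      (volume Q.set)⁻¹ * ∫⁻ x in Q.set, (‖mvec (W x) e‖₊ : ℝ≥0∞) ≤
        A1Const W * ‖mvec (W y) e‖₊ := by
  have hQle : essSup (fun y => (volume Q.set)⁻¹ *
      ∫⁻ x in Q.set, ENNReal.ofReal (opNorm (W x * (W y)⁻¹))) (volume.restrict Q.set) ≤
      A1Const W := le_iSup (fun Q : Cube d => essSup (fun y => (volume Q.set)⁻¹ *
      ∫⁻ x in Q.set, ENNReal.ofReal (opNorm (W x * (W y)⁻¹))) (volume.restrict Q.set)) Q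
  have hess : ∀ᵐ y ∂(volume.restrict Q.set),
      (volume Q.set)⁻¹ * ∫⁻ x in Q.set, ENNReal.ofReal (opNorm (W x * (W y)⁻¹)) ≤
        A1Const W :=
    (ENNReal.ae_le_essSup _).mono fun y hy => hy.trans hQle
  rw [ae_restrict_iff' (cube_measurableSet Q)] at hess
  filter_upwards [hess, hW2] with y h1 h2 hyQ
  have hkey : ∀ x : Rd d, (‖mvec (W x) e‖₊ : ℝ≥0∞) ≤
      ENNReal.ofReal (opNorm (W x * (W y)⁻¹)) * ‖mvec (W y) e‖₊ := by
    intro x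
    have hinv : W x * (W y)⁻¹ * W y = W x := by
      rw [mul_assoc, Matrix.nonsing_inv_mul _ ((Matrix.isUnit_iff_isUnit_det _).1 h2.isUnit),
        mul_one]
    have hr : ‖mvec (W x) e‖ ≤ opNorm (W x * (W y)⁻¹) * ‖mvec (W y) e‖ := by
      calc ‖mvec (W x) e‖ = ‖mvec (W x * (W y)⁻¹) (mvec (W y) e)‖ := by
            rw [← mvec_mul, hinv]
        _ ≤ _ := mvec_norm_le _ _
    rw [← ENNReal.ofReal_coe_nnreal, ← ENNReal.ofReal_coe_nnreal, coe_nnnorm, coe_nnnorm,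
      ← ENNReal.ofReal_mul (opNorm_nonneg _)]
    exact ENNReal.ofReal_le_ofReal hr
  calc (volume Q.set)⁻¹ * ∫⁻ x in Q.set, (‖mvec (W x) e‖₊ : ℝ≥0∞)
      ≤ (volume Q.set)⁻¹ *
        ∫⁻ x in Q.set, ENNReal.ofReal (opNorm (W x * (W y)⁻¹)) * ‖mvec (W y) e‖₊ :=
        mul_le_mul_right (lintegral_mono fun x => hkey x) _
    _ = ((volume Q.set)⁻¹ *
        ∫⁻ x in Q.set, ENNReal.ofReal (opNorm (W x * (W y)⁻¹))) * ‖mvec (W y) e‖₊ := by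
        rw [lintegral_mul_const' _ _ ENNReal.coe_ne_top, mul_assoc]
    _ ≤ A1Const W * ‖mvec (W y) e‖₊ := mul_le_mul_left (h1 hyQ) _

/-- A cube with rational data. -/
def ratCube (c : Fin d → ℚ) (s : {q : ℚ // 0 < q}) : Cube d :=
  ⟨(WithLp.equiv 2 (Fin d → ℝ)).symm fun i => (c i : ℝ), (s.1 : ℝ), by exact_mod_cast s.2⟩

lemma ratCube_corner (c : Fin d → ℚ) (s : {q : ℚ // 0 < q}) (i : Fin d) :
    (ratCube c s).corner i = (c i : ℝ) := rfl

/-- A.e. pointwise bound for the maximal function of `|W·e|`. -/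
lemma hlm_bound {W : Rd d → Mat n} (hd : 1 ≤ d) (hW2 : ∀ᵐ x : Rd d, (W x).PosDef)
    (e : Vec n) :
    ∀ᵐ y : Rd d, HLM (fun x => (‖mvec (W x) e‖₊ : ℝ≥0∞)) y ≤
      A1Const W * ‖mvec (W y) e‖₊ := by
  have hae : ∀ᵐ y : Rd d, ∀ (c : Fin d → ℚ) (s : {q : ℚ // 0 < q}),
      y ∈ (ratCube c s).set →
      (volume (ratCube c s).set)⁻¹ * ∫⁻ x in (ratCube c s).set, (‖mvec (W x) e‖₊ : ℝ≥0∞) ≤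
        A1Const W * ‖mvec (W y) e‖₊ := by
    rw [ae_all_iff]
    intro c
    rw [ae_all_iff]
    intro s
    exact avg_bound hW2 e (ratCube c s)
  filter_upwards [hae] with y hy
  refine iSup_le fun R => iSup_le fun hyR => ?_
  refine ennreal_le_of_forall_mul_le fun cE hc1 hctop => ?_
  set s : ℝ := R.side with hsdef
  have hs : 0 < s := R.side_pos
  set cr : ℝ := cE.toReal with hcrdef
  have hcr : 1 < cr := by
    rw [hcrdef, ← ENNReal.toReal_one]
    exact ENNReal.toReal_strict_mono hctop hc1
  have hdr : (0 : ℝ) < (d : ℝ) := by exact_mod_cast hd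
  have hrt : 1 < cr ^ ((1 : ℝ) / d) :=
    (Real.one_lt_rpow_iff_of_pos (by linarith)).2 (Or.inl ⟨hcr, by positivity⟩)
  have hst : s < s * cr ^ ((1 : ℝ) / d) := by nlinarith
  obtain ⟨s', hs1, hs2⟩ := exists_rat_btwn hst
  have hs'pos : (0 : ℚ) < s' := by exact_mod_cast hs.trans hs1
  have hcorner : ∀ i : Fin d, R.corner i - ((s' : ℝ) - s) < R.corner i := by
    intro i; linarith
  choose ci hci1 hci2 using fun i => exists_rat_btwn (hcorner i)
  set Q : Cube d := ratCube ci ⟨s', hs'pos⟩ with hQdef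
  have hQside : Q.side = (s' : ℝ) := rfl
  have hsub : R.set ⊆ Q.set := by
    intro x hx i
    have h1 := (hx i).1
    have h2 := (hx i).2
    have hc1i := hci1 i
    have hc2i := hci2 i
    rw [ratCube_corner]
    constructor <;> [linarith; linarith]
  have hyQ : y ∈ Q.set := hsub hyR
  have hQavg := hy ci ⟨s', hs'pos⟩ hyQ
  have hvR : volume R.set = ENNReal.ofReal (s ^ d) := cube_volume R
  have hvQ : volume Q.set = ENNReal.ofReal ((s' : ℝ) ^ d) := cube_volume Q
  have hQ0 : volume Q.set ≠ 0 := by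
    rw [hvQ]
    simp only [ne_eq, ENNReal.ofReal_eq_zero, not_le]
    positivity
  have hQt : volume Q.set ≠ ∞ := by rw [hvQ]; exact ENNReal.ofReal_ne_top
  have hratio : (volume R.set)⁻¹ * volume Q.set ≤ cE := by
    have hpow : (s' : ℝ) ^ d ≤ s ^ d * cr := by
      have h1 : (s' : ℝ) ^ d ≤ (s * cr ^ ((1 : ℝ) / d)) ^ d :=
        pow_le_pow_left₀ (by positivity) hs2.le d
      have h2 : (s * cr ^ ((1 : ℝ) / d)) ^ d = s ^ d * cr := by
        rw [mul_pow, ← Real.rpow_natCast (cr ^ ((1 : ℝ) / d)) d, ← Real.rpow_mul (by positivity),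
          one_div, inv_mul_cancel₀ hdr.ne', Real.rpow_one]
      linarith
    have hdiv : (s' : ℝ) ^ d / s ^ d ≤ cr := by
      rw [div_le_iff₀ (by positivity)]
      linarith [hpow]
    calc (volume R.set)⁻¹ * volume Q.set
        = ENNReal.ofReal ((s' : ℝ) ^ d) / ENNReal.ofReal (s ^ d) := by
          rw [hvR, hvQ, div_eq_mul_inv, mul_comm]
      _ = ENNReal.ofReal ((s' : ℝ) ^ d / s ^ d) := by
          rw [← ENNReal.ofReal_div_of_pos (by positivity)]
      _ ≤ ENNReal.ofReal cr := ENNReal.ofReal_le_ofReal hdiv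
      _ = cE := ENNReal.ofReal_toReal hctop
  calc (volume R.set)⁻¹ * ∫⁻ x in R.set, (‖mvec (W x) e‖₊ : ℝ≥0∞)
      ≤ (volume R.set)⁻¹ * ∫⁻ x in Q.set, (‖mvec (W x) e‖₊ : ℝ≥0∞) :=
        mul_le_mul_right (lintegral_mono_set hsub) _
    _ = (volume R.set)⁻¹ * (volume Q.set *
          ((volume Q.set)⁻¹ * ∫⁻ x in Q.set, (‖mvec (W x) e‖₊ : ℝ≥0∞))) := by
        rw [← mul_assoc (volume Q.set), ENNReal.mul_inv_cancel hQ0 hQt, one_mul]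
    _ ≤ (volume R.set)⁻¹ * (volume Q.set * (A1Const W * ‖mvec (W y) e‖₊)) :=
        mul_le_mul_right (mul_le_mul_right hQavg _) _
    _ = ((volume R.set)⁻¹ * volume Q.set) * (A1Const W * ‖mvec (W y) e‖₊) := by
        rw [mul_assoc]
    _ ≤ cE * (A1Const W * ‖mvec (W y) e‖₊) := mul_le_mul_left hratio _

end Aux

/-- For a matrix `A₁` weight, the scalar `A∞` characteristics of the weights `|W e|` are
controlled by `[W]_{A₁}`; in particular `[W]_{A^{sc}_{1,∞}} ≤ [W]_{A₁}`. -/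
theorem a1_controls_scalar_ainfty (d n : ℕ) (hd : 1 ≤ d) (hn : 1 ≤ n)
    (W : Rd d → Mat n) (hW : IsMatrixWeight W) (hA1 : A1Const W ≠ ⊤) :
    (∀ e : Vec n, AInftyConst (fun x => (‖mvec (W x) e‖₊ : ℝ≥0∞)) ≤ A1Const W) ∧
    AqScConst W 1 ≤ A1Const W := by
  have part1 : ∀ e : Vec n,
      AInftyConst (fun x => (‖mvec (W x) e‖₊ : ℝ≥0∞)) ≤ A1Const W := by
    intro e
    refine iSup_le fun Q => ?_
    have hmax := hlm_bound hd hW.2 (e := e)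
    have h1 : ∫⁻ x in Q.set, HLM (Q.set.indicator fun x => (‖mvec (W x) e‖₊ : ℝ≥0∞)) x ≤
        A1Const W * ∫⁻ x in Q.set, (‖mvec (W x) e‖₊ : ℝ≥0∞) := by
      calc ∫⁻ x in Q.set, HLM (Q.set.indicator fun x => (‖mvec (W x) e‖₊ : ℝ≥0∞)) x
          ≤ ∫⁻ x in Q.set, HLM (fun x => (‖mvec (W x) e‖₊ : ℝ≥0∞)) x :=
            lintegral_mono fun x => hlm_mono (fun z => Set.indicator_le_self _ _ z) x
        _ ≤ ∫⁻ x in Q.set, A1Const W * (‖mvec (W x) e‖₊ : ℝ≥0∞) :=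
            lintegral_mono_ae (ae_restrict_of_ae hmax)
        _ = A1Const W * ∫⁻ x in Q.set, (‖mvec (W x) e‖₊ : ℝ≥0∞) :=
            lintegral_const_mul' _ _ hA1
    exact ennreal_inv_mul_le h1
  refine ⟨part1, ?_⟩
  refine iSup_le fun e => ?_
  have heq : (fun x => (‖mvec (matPow (W x) (1 / 1)) e‖₊ : ℝ≥0∞) ^ (1 : ℝ)) =ᵐ[volume]
      fun x => (‖mvec (W x) e‖₊ : ℝ≥0∞) := by
    filter_upwards [hW.2] with x hx
    rw [ENNReal.rpow_one]
    norm_num [matPow_one_of_posDef hx]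
  rw [aInftyConst_congr_ae heq]
  exact part1 e

end
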